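/- The function t ↦ log g_α(e^t), where g_α(x) = sin(πα)/(πα(x² + 2cos(πα)x + 1)), is concave on ℝ if and only if α ≤ 1/2. -/

import Mathlib

open Real

noncomputable def gDens (α x : ℝ) : ℝ :=
  Real.sin (Real.pi * α) / (Real.pi * α * (x ^ 2 + 2 * Real.cos (Real.pi * α) * x + 1))

section Aux

variable (c : ℝ)

/-- The denominator as a function of `t`. -/
noncomputable def Dfun (t : ℝ) : ℝ := Real.exp t ^ 2 + 2 * c * Real.exp t + 1

noncomputable def Ffun (t : ℝ) : ℝ := - Real.log (Dfun c t)

noncomputable def Ffun' (t : ℝ) : ℝ :=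
  -((2 * Real.exp t ^ 2 + 2 * c * Real.exp t) / Dfun c t)

noncomputable def Ffun'' (t : ℝ) : ℝ :=
  -((2 * Real.exp t * (c * Real.exp t ^ 2 + 2 * Real.exp t + c)) / Dfun c t ^ 2)

variable {c}

lemma Dfun_pos (hc : c ^ 2 < 1) (t : ℝ) : 0 < Dfun c t := by
  have h := Real.exp_pos t
  have : (0:ℝ) ≤ (Real.exp t + c) ^ 2 := sq_nonneg _
  unfold Dfun
  nlinarith

lemma hasDerivAt_Dfun (t : ℝ) :
    HasDerivAt (Dfun c) (2 * Real.exp t ^ 2 + 2 * c * Real.exp t) t := by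
  have h0 : HasDerivAt Real.exp (Real.exp t) t := Real.hasDerivAt_exp t
  have h1 := ((h0.pow 2).add (h0.const_mul (2 * c))).add_const 1
  exact h1.congr_deriv (by ring)

lemma hasDerivAt_Ffun (hc : c ^ 2 < 1) (t : ℝ) :
    HasDerivAt (Ffun c) (Ffun' c t) t := by
  have h := ((hasDerivAt_Dfun (c := c) t).log (Dfun_pos hc t).ne').neg
  exact h

lemma hasDerivAt_Ffun' (hc : c ^ 2 < 1) (t : ℝ) :
    HasDerivAt (Ffun' c) (Ffun'' c t) t := by
  have h0 : HasDerivAt Real.exp (Real.exp t) t := Real.hasDerivAt_exp t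
  have hN : HasDerivAt (fun t => 2 * Real.exp t ^ 2 + 2 * c * Real.exp t)
      (4 * Real.exp t ^ 2 + 2 * c * Real.exp t) t := by
    have h1 := ((h0.pow 2).const_mul 2).add (h0.const_mul (2 * c))
    exact h1.congr_deriv (by ring)
  have h := (hN.div (hasDerivAt_Dfun t) (Dfun_pos hc t).ne').neg
  refine h.congr_deriv ?_
  unfold Ffun'' Dfun
  have hD := (Dfun_pos hc t).ne'
  field_simp
  ring

lemma deriv_Ffun (hc : c ^ 2 < 1) : deriv (Ffun c) = Ffun' c :=
  funext fun t => (hasDerivAt_Ffun hc t).deriv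

lemma deriv2_Ffun (hc : c ^ 2 < 1) (t : ℝ) : deriv^[2] (Ffun c) t = Ffun'' c t := by
  have : deriv^[2] (Ffun c) t = deriv (deriv (Ffun c)) t := by
    simp [Function.iterate_succ, Function.comp]
  rw [this, deriv_Ffun hc, (hasDerivAt_Ffun' hc t).deriv]

lemma concave_Ffun (hc0 : 0 ≤ c) (hc : c ^ 2 < 1) :
    ConcaveOn ℝ Set.univ (Ffun c) := by
  apply concaveOn_of_deriv2_nonpos convex_univ
  · exact fun t _ => ((hasDerivAt_Ffun hc t).continuousAt).continuousWithinAt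
  · exact fun t _ => (hasDerivAt_Ffun hc t).differentiableAt.differentiableWithinAt
  · intro t _
    rw [interior_univ] at *
    rw [deriv_Ffun hc]
    exact (hasDerivAt_Ffun' hc t).differentiableAt.differentiableWithinAt
  · intro t _
    rw [deriv2_Ffun hc]
    unfold Ffun'' Dfun
    have h := Real.exp_pos t
    have hD := Dfun_pos hc t
    apply neg_nonpos.mpr
    apply div_nonneg
    · nlinarith [mul_nonneg hc0 (pow_pos h 3).le, mul_nonneg hc0 h.le, pow_pos h 2]
    · positivity

lemma strictConvex_Ffun (hc0 : c < 0) (hc : c ^ 2 < 1) :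
    StrictConvexOn ℝ (Set.Ici (Real.log (2 / (-c) + 1))) (Ffun c) := by
  set T := Real.log (2 / (-c) + 1)
  apply strictConvexOn_of_deriv2_pos (convex_Ici T)
  · exact fun t _ => ((hasDerivAt_Ffun hc t).continuousAt).continuousWithinAt
  · intro t ht
    rw [interior_Ici] at ht
    rw [deriv2_Ffun hc]
    unfold Ffun'' Dfun
    have hb : 0 < -c := neg_pos.mpr hc0
    have hval : (0:ℝ) < 2 / (-c) + 1 := by positivity
    have hu : 2 / (-c) + 1 < Real.exp t := by
      calc 2 / (-c) + 1 = Real.exp T := (Real.exp_log hval).symm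
        _ < Real.exp t := Real.exp_lt_exp.mpr ht
    have hu2 : 2 / (-c) < Real.exp t := by linarith
    have hu3 : 2 < (-c) * Real.exp t := by
      rw [div_lt_iff₀ hb] at hu2; linarith [mul_comm (Real.exp t) (-c)]
    have hupos := Real.exp_pos t
    have hneg : c * Real.exp t ^ 2 + 2 * Real.exp t + c < 0 := by nlinarith
    have hD := Dfun_pos hc t
    have : (2 * Real.exp t * (c * Real.exp t ^ 2 + 2 * Real.exp t + c)) / Dfun c t ^ 2 < 0 := by
      apply div_neg_of_neg_of_pos
      · nlinarith
      · unfold Dfun; positivity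
    unfold Dfun at this
    linarith

end Aux

theorem gDens_logconcave_iff (α : ℝ) (hα : α ∈ Set.Ioo (0:ℝ) 1) :
    ConcaveOn ℝ Set.univ (fun t => Real.log (gDens α (Real.exp t))) ↔ α ≤ 1/2 := by
  obtain ⟨hα0, hα1⟩ := hα
  have hπ := Real.pi_pos
  have hπα0 : 0 < Real.pi * α := by positivity
  have hπαπ : Real.pi * α < Real.pi := by nlinarith
  set c := Real.cos (Real.pi * α) with hc_def
  have hsin : 0 < Real.sin (Real.pi * α) := Real.sin_pos_of_pos_of_lt_pi hπα0 hπαπ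
  have hc : c ^ 2 < 1 := by
    have h1 : Real.sin (Real.pi * α) ^ 2 + c ^ 2 = 1 := Real.sin_sq_add_cos_sq _
    nlinarith
  -- rewrite the function
  have hfun : (fun t => Real.log (gDens α (Real.exp t)))
      = fun t => (Real.log (Real.sin (Real.pi * α)) - Real.log (Real.pi * α)) + Ffun c t := by
    funext t
    have hD := Dfun_pos hc t
    unfold gDens Ffun Dfun
    rw [Real.log_div hsin.ne' (by positivity), Real.log_mul hπα0.ne' (by unfold Dfun at hD; positivity)]
    rw [hc_def]
    ring
  rw [hfun]
  constructor
  · intro hconc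
    by_contra hgt
    push_neg at hgt
    have hcneg : c < 0 := by
      apply Real.cos_neg_of_pi_div_two_lt_of_lt
      · nlinarith
      · nlinarith
    -- get concavity of Ffun c
    have hF : ConcaveOn ℝ Set.univ (Ffun c) := by
      have := hconc.add_const (-(Real.log (Real.sin (Real.pi * α)) - Real.log (Real.pi * α)))
      have heq : Ffun c = (fun t => (Real.log (Real.sin (Real.pi * α)) - Real.log (Real.pi * α)) + Ffun c t)
          + fun _ => -(Real.log (Real.sin (Real.pi * α)) - Real.log (Real.pi * α)) := by
        funext t
        simp only [Pi.add_apply]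
        ring
      rw [heq]; exact this
    have hS := strictConvex_Ffun hcneg hc
    set T := Real.log (2 / (-c) + 1)
    have h1 : T ∈ Set.Ici T := Set.self_mem_Ici
    have h2 : T + 2 ∈ Set.Ici T := by simp
    have hne : T ≠ T + 2 := by linarith
    have hlt := hS.2 h1 h2 hne (by norm_num : (0:ℝ) < 1/2) (by norm_num : (0:ℝ) < 1/2)
      (by norm_num)
    have hge := hF.2 (Set.mem_univ T) (Set.mem_univ (T + 2))
      (by norm_num : (0:ℝ) ≤ 1/2) (by norm_num : (0:ℝ) ≤ 1/2) (by norm_num)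
    simp only [smul_eq_mul] at hlt hge
    linarith
  · intro hle
    have hcnn : 0 ≤ c := by
      apply Real.cos_nonneg_of_mem_Icc
      constructor
      · linarith
      · nlinarith
    exact (concaveOn_const _ convex_univ).add (concave_Ffun hcnn hc)
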